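/- Let X be a subshift over a finite alphabet A. Then for every n ≥ 1, |Aut^{(FIP)}_{⌊(n−1)/2⌋}(X,σ)| ≤ (c_{1+c_n(X)}(X))^{2|A|(c_{n+1}(X) − c_n(X))}. -/

import Mathlib

open Filter Topology

/-- The left shift on bi-infinite sequences, as a bijection. -/
def shiftPerm (A : Type) : Equiv.Perm (ℤ → A) where
  toFun x n := x (n + 1)
  invFun x n := x (n - 1)
  left_inv x := funext fun n => by simp
  right_inv x := funext fun n => by simp

/-- A subshift: a closed, shift-invariant subset of the full shift. -/
def IsSubshift {A : Type} [TopologicalSpace A] (X : Set (ℤ → A)) : Prop :=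
  IsClosed X ∧ (shiftPerm A) '' X = X

/-- The word `w` occurs in some point of `X`. -/
def WordIn {A : Type} (X : Set (ℤ → A)) (w : List A) : Prop :=
  ∃ x ∈ X, ∃ i : ℤ, ∀ j : Fin w.length, x (i + ((j : ℕ) : ℤ)) = w.get j

/-- The language of `X`. -/
def language {A : Type} (X : Set (ℤ → A)) : Set (List A) :=
  {w | WordIn X w}

/-- The word complexity function `c_n(X)`: the number of `n`-letter words of `X`. -/
noncomputable def complexity {A : Type} (X : Set (ℤ → A)) (n : ℕ) : ℕ :=
  Nat.card {w : List A // w.length = n ∧ w ∈ language X}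

/-- The shift restricted to a subshift, as a bijection of the subshift. -/
def shiftRestrict {A : Type} [TopologicalSpace A] {X : Set (ℤ → A)} (hX : IsSubshift X) :
    Equiv.Perm ↥X where
  toFun x := ⟨shiftPerm A x, by
    have h : shiftPerm A (x : ℤ → A) ∈ (shiftPerm A) '' X := ⟨x, x.2, rfl⟩
    rwa [hX.2] at h⟩
  invFun x := ⟨(shiftPerm A).symm x, by
    have h : (x : ℤ → A) ∈ (shiftPerm A) '' X := by rw [hX.2]; exact x.2
    obtain ⟨y, hy, hyx⟩ := h
    have h2 : (shiftPerm A).symm (x : ℤ → A) = y := by rw [← hyx]; simp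
    rwa [h2]⟩
  left_inv x := Subtype.ext (by simp)
  right_inv x := Subtype.ext (by simp)

/-- The automorphism group of a subshift: shift-commuting self-homeomorphisms of `X`. -/
def Aut {A : Type} [TopologicalSpace A] {X : Set (ℤ → A)} (hX : IsSubshift X) :
    Subgroup (Equiv.Perm ↥X) where
  carrier := {φ : Equiv.Perm ↥X | Continuous ⇑φ ∧ Continuous ⇑(φ⁻¹) ∧
    ∀ x, φ (shiftRestrict hX x) = shiftRestrict hX (φ x)}
  one_mem' := ⟨continuous_id, continuous_id, fun _ => rfl⟩
  mul_mem' := by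
    rintro a b ⟨ha1, ha2, ha3⟩ ⟨hb1, hb2, hb3⟩
    refine ⟨?_, ?_, fun x => ?_⟩
    · exact ha1.comp hb1
    · exact hb2.comp ha2
    · simp only [Equiv.Perm.mul_apply, hb3, ha3]
  inv_mem' := by
    rintro a ⟨ha1, ha2, ha3⟩
    refine ⟨ha2, by simpa using ha1, fun x => ?_⟩
    apply a.injective
    rw [ha3]; simp

/-- `x` is an isolated point of `X`. -/
def IsIsolatedPoint {A : Type} [TopologicalSpace A] (X : Set (ℤ → A)) (x : ℤ → A) : Prop :=
  ∃ U : Set (ℤ → A), IsOpen U ∧ U ∩ X = {x}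

/-- `x` is an isolated periodic point of `X`. -/
def IsIsolatedPeriodicPt {A : Type} [TopologicalSpace A] (X : Set (ℤ → A)) (x : ℤ → A) : Prop :=
  x ∈ X ∧ IsIsolatedPoint X x ∧ ∃ p : ℕ, 1 ≤ p ∧ ∀ m : ℤ, x (m + (p : ℤ)) = x m

/-- `φ` is induced by the block map `Φ` with range `N`. -/
def InducedBy {A : Type} {X : Set (ℤ → A)} (φ : Equiv.Perm ↥X) (N : ℕ)
    (Φ : (Fin (2 * N + 1) → A) → A) : Prop :=
  ∀ (x : ↥X) (m : ℤ), (φ x : ℤ → A) m = Φ (fun j => (x : ℤ → A) (m - (N : ℤ) + ((j : ℕ) : ℤ)))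

/-- `φ` has range `N`: it is induced by some block map on words of length `2N+1`. -/
def HasRange {A : Type} {X : Set (ℤ → A)} (φ : Equiv.Perm ↥X) (N : ℕ) : Prop :=
  ∃ Φ : (Fin (2 * N + 1) → A) → A, InducedBy φ N Φ


section Aux

variable {A : Type} (X : Set (ℤ → A))

/-- Window of length `m` of `x` starting at `i`. -/
def winw (m : ℕ) (x : ℤ → A) (i : ℤ) : Fin m → A := fun j => x (i + (j : ℕ))

/-- The word `w` (as a function) occurs in `X`. -/
def ExtW (m : ℕ) (w : Fin m → A) : Prop :=
  ∃ p : (ℤ → A) × ℤ, p.1 ∈ X ∧ winw m p.1 p.2 = w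

/-- Right special word. -/
def RSp (n : ℕ) (w : Fin n → A) : Prop :=
  ∃ a b : A, a ≠ b ∧ ExtW X (n+1) (Fin.snoc w a) ∧ ExtW X (n+1) (Fin.snoc w b)

/-- Left special word. -/
def LSp (n : ℕ) (w : Fin n → A) : Prop :=
  ∃ a b : A, a ≠ b ∧ ExtW X (n+1) (Fin.cons a w) ∧ ExtW X (n+1) (Fin.cons b w)

variable {X}

lemma ext_winw {x : ℤ → A} (hx : x ∈ X) (m : ℕ) (i : ℤ) : ExtW X m (winw m x i) :=
  ⟨(x, i), hx, rfl⟩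

lemma winw_snoc (n : ℕ) (x : ℤ → A) (i : ℤ) :
    winw (n+1) x i = Fin.snoc (winw n x i) (x (i + n)) := by
  funext j
  refine Fin.lastCases ?_ (fun j => ?_) j
  · simp [winw, Fin.snoc]
  · simp [winw, Fin.snoc, Fin.castSucc, Fin.castAdd, Fin.castLE, j.isLt]

lemma winw_cons (n : ℕ) (x : ℤ → A) (i : ℤ) :
    winw (n+1) x i = Fin.cons (x i) (winw n x (i+1)) := by
  funext j
  refine Fin.cases ?_ (fun j => ?_) j
  · simp [winw]
  · simp only [winw, Fin.cons_succ]
    congr 1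
    have : ((j.succ : Fin (n+1)) : ℕ) = (j : ℕ) + 1 := rfl
    rw [this]
    push_cast
    ring

lemma winw_eq_of {m : ℕ} {x x' : ℤ → A} {i i' : ℤ}
    (h : ∀ s : ℕ, s < m → x (i + s) = x' (i' + s)) : winw m x i = winw m x' i' := by
  funext j; exact h j j.isLt



/-! ### Cardinality interface -/

noncomputable def extEquiv (m : ℕ) :
    {w : Fin m → A // ExtW X m w} ≃ {l : List A // l.length = m ∧ l ∈ language X} where
  toFun w := ⟨List.ofFn w.1, by
    refine ⟨List.length_ofFn, ?_⟩
    obtain ⟨⟨x, i⟩, hx, hwin⟩ := w.2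
    refine ⟨x, hx, i, fun j => ?_⟩
    rw [List.get_ofFn]
    have : x (i + ((j : ℕ) : ℤ)) = winw m x i (Fin.cast (List.length_ofFn) j) := rfl
    rw [this, hwin]⟩
  invFun l := ⟨fun j => l.1.get (Fin.cast l.2.1.symm j), by
    obtain ⟨x, hx, i, hj⟩ := l.2.2
    refine ⟨(x, i), hx, funext fun j => ?_⟩
    exact hj (Fin.cast l.2.1.symm j)⟩
  left_inv w := by
    apply Subtype.ext
    funext j
    simp only [List.get_ofFn]
    congr 1
  right_inv l := by
    apply Subtype.ext
    obtain ⟨l, hl, hmem⟩ := l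
    simp only
    subst hl
    simp [List.ofFn_get]

lemma card_ext_eq (m : ℕ) : Nat.card {w : Fin m → A // ExtW X m w} = complexity X m :=
  Nat.card_congr (extEquiv (X := X) m)

variable [Fintype A]

lemma complexity_pos (hne : X.Nonempty) (m : ℕ) : 1 ≤ complexity X m := by
  rw [← card_ext_eq]
  obtain ⟨x, hx⟩ := hne
  have : Nonempty {w : Fin m → A // ExtW X m w} := ⟨⟨winw m x 0, ext_winw hx m 0⟩⟩
  exact Nat.card_pos

lemma snoc_inj {n : ℕ} {w w' : Fin n → A} {a a' : A}
    (h : (Fin.snoc w a : Fin (n+1) → A) = Fin.snoc w' a') : w = w' ∧ a = a' := by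
  constructor
  · funext j
    have := congrFun h j.castSucc
    simpa using this
  · have := congrFun h (Fin.last n)
    simpa using this

lemma cons_inj' {n : ℕ} {w w' : Fin n → A} {a a' : A}
    (h : (Fin.cons a w : Fin (n+1) → A) = Fin.cons a' w') : w = w' ∧ a = a' := by
  constructor
  · funext j
    have := congrFun h j.succ
    simpa using this
  · have := congrFun h 0
    simpa using this

lemma ext_snoc_exists {n : ℕ} {w : Fin n → A} (h : ExtW X n w) :
    ∃ a, ExtW X (n+1) (Fin.snoc w a) := by
  obtain ⟨⟨x, i⟩, hx, hwin⟩ := h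
  exact ⟨x (i + n), by rw [← hwin, ← winw_snoc]; exact ext_winw hx _ i⟩

lemma ext_cons_exists {n : ℕ} {w : Fin n → A} (h : ExtW X n w) :
    ∃ a, ExtW X (n+1) (Fin.cons a w) := by
  obtain ⟨⟨x, i⟩, hx, hwin⟩ := h
  refine ⟨x (i - 1), ?_⟩
  rw [← hwin]
  have : Fin.cons (x (i-1)) (winw n x i) = winw (n+1) x (i-1) := by
    rw [winw_cons]
    congr 2
    ring
  rw [this]
  exact ext_winw hx _ _

lemma card_RS_le (n : ℕ) :
    Nat.card {w : Fin n → A // ExtW X n w ∧ RSp X n w} ≤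
      complexity X (n+1) - complexity X n := by
  classical
  have key : complexity X n + Nat.card {w : Fin n → A // ExtW X n w ∧ RSp X n w} ≤
      complexity X (n+1) := by
    rw [← card_ext_eq (X := X) n, ← card_ext_eq (X := X) (n+1), ← Nat.card_sum]
    set e1 : {w : Fin n → A // ExtW X n w} → A := fun w => (ext_snoc_exists w.2).choose
    have he1 : ∀ w, ExtW X (n+1) (Fin.snoc w.1 (e1 w)) := fun w => (ext_snoc_exists w.2).choose_spec
    have h2 : ∀ w : {w : Fin n → A // ExtW X n w ∧ RSp X n w},
        ∃ a, ExtW X (n+1) (Fin.snoc w.1 a) ∧ a ≠ e1 ⟨w.1, w.2.1⟩ := by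
      rintro ⟨w, hext, a, b, hab, ha, hb⟩
      by_cases h : a = e1 ⟨w, hext⟩
      · exact ⟨b, hb, fun hc => hab (h.trans hc.symm)⟩
      · exact ⟨a, ha, h⟩
    set e2 : {w : Fin n → A // ExtW X n w ∧ RSp X n w} → A := fun w => (h2 w).choose
    refine Nat.card_le_card_of_injective
      (fun u => Sum.elim (fun w => (⟨Fin.snoc w.1 (e1 w), he1 w⟩ : {u : Fin (n+1) → A // ExtW X (n+1) u}))
        (fun w => ⟨Fin.snoc w.1 (e2 w), ((h2 w).choose_spec).1⟩) u) ?_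
    rintro (u | u) (v | v) huv <;> simp only [Sum.elim_inl, Sum.elim_inr, Subtype.mk.injEq] at huv
    · obtain ⟨h1, -⟩ := snoc_inj huv
      simp only [Sum.inl.injEq]
      exact Subtype.ext h1
    · obtain ⟨h1, h2'⟩ := snoc_inj huv
      exfalso
      have hu : u = ⟨v.1, v.2.1⟩ := Subtype.ext h1
      rw [hu] at h2'
      exact ((h2 v).choose_spec).2 h2'.symm
    · obtain ⟨h1, h2'⟩ := snoc_inj huv
      exfalso
      have hv : v = ⟨u.1, u.2.1⟩ := Subtype.ext h1.symm
      rw [hv] at h2'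
      exact ((h2 u).choose_spec).2 h2'
    · obtain ⟨h1, -⟩ := snoc_inj huv
      simp only [Sum.inr.injEq]
      exact Subtype.ext h1
  omega

lemma card_LS_le (n : ℕ) :
    Nat.card {w : Fin n → A // ExtW X n w ∧ LSp X n w} ≤
      complexity X (n+1) - complexity X n := by
  classical
  have key : complexity X n + Nat.card {w : Fin n → A // ExtW X n w ∧ LSp X n w} ≤
      complexity X (n+1) := by
    rw [← card_ext_eq (X := X) n, ← card_ext_eq (X := X) (n+1), ← Nat.card_sum]
    set e1 : {w : Fin n → A // ExtW X n w} → A := fun w => (ext_cons_exists w.2).choose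
    have he1 : ∀ w, ExtW X (n+1) (Fin.cons (e1 w) w.1) := fun w => (ext_cons_exists w.2).choose_spec
    have h2 : ∀ w : {w : Fin n → A // ExtW X n w ∧ LSp X n w},
        ∃ a, ExtW X (n+1) (Fin.cons a w.1) ∧ a ≠ e1 ⟨w.1, w.2.1⟩ := by
      rintro ⟨w, hext, a, b, hab, ha, hb⟩
      by_cases h : a = e1 ⟨w, hext⟩
      · exact ⟨b, hb, fun hc => hab (h.trans hc.symm)⟩
      · exact ⟨a, ha, h⟩
    set e2 : {w : Fin n → A // ExtW X n w ∧ LSp X n w} → A := fun w => (h2 w).choose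
    refine Nat.card_le_card_of_injective
      (fun u => Sum.elim (fun w => (⟨Fin.cons (e1 w) w.1, he1 w⟩ : {u : Fin (n+1) → A // ExtW X (n+1) u}))
        (fun w => ⟨Fin.cons (e2 w) w.1, ((h2 w).choose_spec).1⟩) u) ?_
    rintro (u | u) (v | v) huv <;> simp only [Sum.elim_inl, Sum.elim_inr, Subtype.mk.injEq] at huv
    · obtain ⟨h1, -⟩ := cons_inj' huv
      simp only [Sum.inl.injEq]
      exact Subtype.ext h1
    · obtain ⟨h1, h2'⟩ := cons_inj' huv
      exfalso
      have hu : u = ⟨v.1, v.2.1⟩ := Subtype.ext h1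
      rw [hu] at h2'
      exact ((h2 v).choose_spec).2 h2'.symm
    · obtain ⟨h1, h2'⟩ := cons_inj' huv
      exfalso
      have hv : v = ⟨u.1, u.2.1⟩ := Subtype.ext h1.symm
      rw [hv] at h2'
      exact ((h2 u).choose_spec).2 h2'
    · obtain ⟨h1, -⟩ := cons_inj' huv
      simp only [Sum.inr.injEq]
      exact Subtype.ext h1
  omega

/-- Pigeonhole: among `c_n + 1` consecutive windows two coincide. -/
lemma exists_rep {x : ℤ → A} (hx : x ∈ X) (n : ℕ) (i : ℤ) :
    ∃ t₁ t₂ : ℕ, t₁ < t₂ ∧ t₂ ≤ complexity X n ∧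
      (∀ s : ℕ, s < n → x (i + t₁ + s) = x (i + t₂ + s)) := by
  classical
  set c := complexity X n with hc
  have hninj : ¬ Function.Injective
      (fun t : Fin (c+1) => (⟨winw n x (i + t), ext_winw hx n _⟩ : {w : Fin n → A // ExtW X n w})) := by
    intro hinj
    have := Nat.card_le_card_of_injective _ hinj
    rw [card_ext_eq, Nat.card_eq_fintype_card, Fintype.card_fin] at this
    omega
  simp only [Function.Injective, not_forall] at hninj
  obtain ⟨t₁, t₂, heq, hne⟩ := hninj
  have hne' : (t₁ : ℕ) ≠ (t₂ : ℕ) := fun h => hne (Fin.ext h)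
  have hwe : winw n x (i + (t₁:ℕ)) = winw n x (i + (t₂:ℕ)) := by
    simpa using heq
  rcases lt_or_gt_of_ne hne' with h | h
  · exact ⟨t₁, t₂, h, by omega, fun s hs => congrFun hwe ⟨s, hs⟩⟩
  · exact ⟨t₂, t₁, h, by omega, fun s hs => congrFun hwe.symm ⟨s, hs⟩⟩

/-! ### Forcing lemmas -/

lemma forced_right {x x' : ℤ → A} (hx : x ∈ X) (hx' : x' ∈ X) {n : ℕ} {i i' : ℤ}
    (base : ∀ s : ℕ, s < n → x (i + s) = x' (i' + s))
    (hns : ¬ RSp X n (winw n x i)) : x (i + n) = x' (i' + n) := by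
  by_contra hne
  apply hns
  refine ⟨x (i + n), x' (i' + n), hne, ?_, ?_⟩
  · rw [← winw_snoc]; exact ext_winw hx _ i
  · have hw : winw n x i = winw n x' i' := winw_eq_of base
    rw [hw, ← winw_snoc]; exact ext_winw hx' _ i'

lemma forced_left {x x' : ℤ → A} (hx : x ∈ X) (hx' : x' ∈ X) {n : ℕ} {i i' : ℤ}
    (base : ∀ s : ℕ, s < n → x (i + s) = x' (i' + s))
    (hns : ¬ LSp X n (winw n x i)) : x (i - 1) = x' (i' - 1) := by
  by_contra hne
  apply hns
  have key : ∀ (z : ℤ → A) (kz : ℤ), z ∈ X →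
      ExtW X (n+1) (Fin.cons (z (kz - 1)) (winw n z kz)) := by
    intro z kz hz
    have : (Fin.cons (z (kz-1)) (winw n z kz) : Fin (n+1) → A) = winw (n+1) z (kz-1) := by
      rw [winw_cons]
      congr 2
      ring
    rw [this]
    exact ext_winw hz _ _
  refine ⟨x (i - 1), x' (i' - 1), hne, key x i hx, ?_⟩
  have hw : winw n x i = winw n x' i' := winw_eq_of base
  rw [hw]
  exact key x' i' hx'

lemma force_right_agree {x x' : ℤ → A} (hx : x ∈ X) (hx' : x' ∈ X) {n : ℕ} {i i' : ℤ}
    (T : ℕ) (base : ∀ s : ℕ, s < n → x (i + s) = x' (i' + s))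
    (h : ∀ t : ℕ, t < T → ¬ RSp X n (winw n x (i + t))) :
    ∀ s : ℕ, s < n + T → x (i + s) = x' (i' + s) := by
  induction T with
  | zero => intro s hs; exact base s (by omega)
  | succ T ih =>
    have prev := ih (fun t ht => h t (by omega))
    intro s hs
    rcases lt_or_ge s (n + T) with h1 | h1
    · exact prev s h1
    · have hs' : s = n + T := by omega
      subst hs'
      have base' : ∀ s' : ℕ, s' < n → x ((i + T) + s') = x' ((i' + T) + s') := by
        intro s' hs'
        have := prev (T + s') (by omega)
        convert this using 2 <;> push_cast <;> ring
      have hns : ¬ RSp X n (winw n x (i + (T : ℤ))) := by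
        have := h T (by omega)
        exact this
      have hlet := forced_right hx hx' base' hns
      have e1 : i + ((n + T : ℕ) : ℤ) = (i + T) + n := by push_cast; ring
      have e2 : i' + ((n + T : ℕ) : ℤ) = (i' + T) + n := by push_cast; ring
      rw [e1, e2]; exact hlet

lemma force_left_agree {x x' : ℤ → A} (hx : x ∈ X) (hx' : x' ∈ X) {n : ℕ} {i i' : ℤ}
    (T : ℕ) (base : ∀ s : ℕ, s < n → x (i + s) = x' (i' + s))
    (h : ∀ t : ℕ, t < T → ¬ LSp X n (winw n x (i - t))) :
    ∀ t : ℕ, t ≤ T → ∀ s : ℕ, s < n → x (i - t + s) = x' (i' - t + s) := by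
  intro t
  induction t with
  | zero =>
    intro _ s hs
    have := base s hs
    convert this using 2 <;> push_cast <;> ring
  | succ t ih =>
    intro ht s hs
    have win_t : ∀ s' : ℕ, s' < n → x (i - t + s') = x' (i' - t + s') := ih (by omega)
    have hlet : x (i - t - 1) = x' (i' - t - 1) :=
      forced_left hx hx' win_t (h t (by omega))
    rcases Nat.eq_zero_or_pos s with rfl | hspos
    · convert hlet using 2 <;> push_cast <;> ring
    · have := win_t (s - 1) (by omega)
      convert this using 2 <;> omega

lemma per_right {x : ℤ → A} (hx : x ∈ X) {n : ℕ} {j i : ℤ} {p : ℕ} (hp : 1 ≤ p)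
    (hji : j + p ≤ i)
    (hw : ∀ s : ℕ, s < n → x (j + s) = x (j + p + s))
    (H : ∀ s : ℤ, j ≤ s → s ≤ i → ¬ RSp X n (winw n x s)) :
    ∀ t : ℕ, (∀ s : ℕ, s < n → x (j + t + s) = x (j + p + t + s)) ∧
      ¬ RSp X n (winw n x (j + t)) := by
  intro t
  induction t using Nat.strong_induction_on with
  | _ t IH =>
  have agree : ∀ s : ℕ, s < n → x (j + t + s) = x (j + p + t + s) := by
    rcases Nat.eq_zero_or_pos t with rfl | htpos
    · intro s hs; have := hw s hs; convert this using 2 <;> push_cast <;> ring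
    · obtain ⟨agr, hns⟩ := IH (t-1) (by omega)
      intro s hs
      rcases lt_or_ge (s+1) n with h1 | h1
      · have := agr (s+1) h1
        convert this using 2 <;> omega
      · have hns' : ¬ RSp X n (winw n x (j + t - 1)) := by
          have e : j + ((t-1 : ℕ) : ℤ) = j + t - 1 := by omega
          rw [e] at hns
          exact hns
        have base' : ∀ s' : ℕ, s' < n → x ((j + t - 1) + s') = x ((j + p + t - 1) + s') := by
          intro s' hs'
          have := agr s' hs'
          convert this using 2 <;> omega
        have hlet := forced_right hx hx base' hns'
        convert hlet using 2 <;> omega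
  refine ⟨agree, ?_⟩
  rcases le_or_gt (j + t) i with hle | hgt
  · exact H (j + t) (by omega) hle
  · have hpt : p ≤ t := by omega
    obtain ⟨agr', hns'⟩ := IH (t - p) (by omega)
    have hwin : winw n x (j + t) = winw n x (j + ((t - p : ℕ) : ℤ)) := by
      refine winw_eq_of fun s hs => ?_
      have := (agr' s hs).symm
      convert this using 2 <;> omega
    rw [hwin]
    exact hns'

lemma per_left {x : ℤ → A} (hx : x ∈ X) {n : ℕ} {k i : ℤ} {p : ℕ} (hp : 1 ≤ p)
    (hik : i ≤ k - p)
    (hw : ∀ s : ℕ, s < n → x (k + s) = x (k - p + s))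
    (H : ∀ s : ℤ, i ≤ s → s ≤ k → ¬ LSp X n (winw n x s)) :
    ∀ t : ℕ, (∀ s : ℕ, s < n → x (k - t + s) = x (k - p - t + s)) ∧
      ¬ LSp X n (winw n x (k - t)) := by
  intro t
  induction t using Nat.strong_induction_on with
  | _ t IH =>
  have agree : ∀ s : ℕ, s < n → x (k - t + s) = x (k - p - t + s) := by
    rcases Nat.eq_zero_or_pos t with rfl | htpos
    · intro s hs; have := hw s hs; convert this using 2 <;> push_cast <;> ring
    · obtain ⟨agr, hns⟩ := IH (t-1) (by omega)
      intro s hs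
      rcases Nat.eq_zero_or_pos s with rfl | hspos
      · have hns' : ¬ LSp X n (winw n x (k - (t-1 : ℕ))) := hns
        have base' : ∀ s' : ℕ, s' < n → x ((k - (t-1 : ℕ)) + s') = x ((k - p - (t-1 : ℕ)) + s') := by
          intro s' hs'
          have := agr s' hs'
          convert this using 2 <;> omega
        have hlet := forced_left hx hx base' hns'
        convert hlet using 2 <;> omega
      · have := agr (s-1) (by omega)
        convert this using 2 <;> omega
  refine ⟨agree, ?_⟩
  rcases le_or_gt i (k - t) with hle | hgt
  · exact H (k - t) hle (by omega)
  · have hpt : p ≤ t := by omega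
    obtain ⟨agr', hns'⟩ := IH (t - p) (by omega)
    have hwin : winw n x (k - t) = winw n x (k - ((t - p : ℕ) : ℤ)) := by
      refine winw_eq_of fun s hs => ?_
      have := (agr' s hs).symm
      convert this using 2 <;> omega
    rw [hwin]
    exact hns'

/-! ### Topological lemmas -/

variable [TopologicalSpace A] [DiscreteTopology A]

lemma shift_one_mem (hX : IsSubshift X) {x : ℤ → A} (hx : x ∈ X) :
    (fun s => x (s + 1)) ∈ X := by
  have : (fun s => x (s + 1)) = shiftPerm A x := rfl
  rw [this, ← hX.2]
  exact ⟨x, hx, rfl⟩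

lemma shift_neg_one_mem (hX : IsSubshift X) {x : ℤ → A} (hx : x ∈ X) :
    (fun s => x (s - 1)) ∈ X := by
  have hx' : x ∈ (shiftPerm A) '' X := by rw [hX.2]; exact hx
  obtain ⟨u, hu, hσu⟩ := hx'
  have h2 : (shiftPerm A).symm x = u := by rw [← hσu]; simp
  have h3 : (fun s => x (s - 1)) = (shiftPerm A).symm x := rfl
  rw [h3, h2]
  exact hu

lemma shift_mem (hX : IsSubshift X) {x : ℤ → A} (hx : x ∈ X) (t : ℤ) :
    (fun s => x (s + t)) ∈ X := by
  induction t using Int.induction_on with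
  | zero => simpa using hx
  | succ k ih =>
    have h1 := shift_one_mem hX ih
    have : (fun s => (fun u => x (u + (k:ℤ))) (s + 1)) = fun s => x (s + ((k:ℤ)+1)) := by
      funext s; simp only []; congr 1; ring
    rw [this] at h1
    exact h1
  | pred k ih =>
    have h1 := shift_neg_one_mem hX ih
    have : (fun s => (fun u => x (u + (-(k:ℤ)))) (s - 1)) = fun s => x (s + (-(k:ℤ)-1)) := by
      funext s; simp only []; congr 1; ring
    rw [this] at h1
    exact h1

lemma periodic_completion (hX : IsSubshift X) {x : ℤ → A} (hx : x ∈ X) {p : ℕ} (hp : 1 ≤ p)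
    {j : ℤ} (hper : ∀ s : ℤ, j ≤ s → x (s + p) = x s) :
    ∃ y ∈ X, (∀ s : ℤ, j ≤ s → y s = x s) ∧ (∀ s : ℤ, y (s + p) = y s) := by
  have hp0 : (0:ℤ) < p := by exact_mod_cast hp
  set y : ℤ → A := fun s => x (j + (s - j) % (p:ℤ)) with hy
  have hagree : ∀ s : ℤ, j ≤ s → y s = x s := by
    intro s hs
    have key : ∀ m : ℕ, ∀ s : ℤ, j ≤ s → (s - j).toNat = m → x (j + (s - j) % (p:ℤ)) = x s := by
      intro m
      induction m using Nat.strong_induction_on with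
      | _ m IH =>
        intro s hs hm
        rcases lt_or_ge (s - j) (p:ℤ) with h1 | h1
        · have : (s - j) % (p:ℤ) = s - j := Int.emod_eq_of_lt (by omega) h1
          rw [this]
          congr 1
          ring
        · have hjs : j ≤ s - p := by omega
          have h2 : x s = x (s - p) := by
            have := hper (s - p) hjs
            rw [show s - (p:ℤ) + p = s by ring] at this
            exact this
          rw [h2]
          have h3 : (s - (p:ℤ) - j) % (p:ℤ) = (s - j) % (p:ℤ) := by
            rw [show s - (p:ℤ) - j = (s - j) + (p:ℤ) * (-1) by ring]
            exact Int.add_mul_emod_self_left ..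
          have := IH ((s - p - j).toNat) (by omega) (s - p) hjs rfl
          rw [h3] at this
          exact this
    exact key ((s - j).toNat) s hs rfl
  have hpery : ∀ s : ℤ, y (s + p) = y s := by
    intro s
    simp only [hy]
    congr 2
    rw [show s + (p:ℤ) - j = (s - j) + (p:ℤ) * 1 by ring]
    exact Int.add_mul_emod_self_left ..
  have hymul : ∀ k : ℕ, ∀ s : ℤ, y (s + (k * p : ℕ)) = y s := by
    intro k
    induction k with
    | zero => intro s; simp
    | succ k ih =>
      intro s
      have e : s + ((k+1) * p : ℕ) = (s + (k * p : ℕ)) + p := by push_cast; ring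
      rw [e, hpery, ih]
  have hyX : y ∈ X := by
    have htend : Filter.Tendsto (fun k : ℕ => (fun s => x (s + (k * p : ℕ)))) Filter.atTop (𝓝 y) := by
      rw [tendsto_pi_nhds]
      intro s
      apply Filter.Tendsto.congr' _ tendsto_const_nhds
      rw [Filter.eventuallyEq_iff_exists_mem]
      refine ⟨{k | (j - s).toNat ≤ k}, Filter.mem_atTop _, fun k hk => ?_⟩
      simp only [Set.mem_setOf_eq] at hk
      have h1 : j ≤ s + (k * p : ℕ) := by
        have h2 : (j - s).toNat ≤ k * p := le_trans hk (Nat.le_mul_of_pos_right k hp)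
        have h3 : j - s ≤ ((j - s).toNat : ℤ) := Int.self_le_toNat _
        have h4 : ((j - s).toNat : ℤ) ≤ (k * p : ℕ) := by exact_mod_cast h2
        omega
      have := hagree (s + (k * p : ℕ)) h1
      rw [hymul k s] at this
      exact this
    exact hX.1.mem_of_tendsto htend (Filter.Eventually.of_forall fun k => shift_mem hX hx _)
  exact ⟨y, hyX, hagree, hpery⟩

lemma isolated_of_no_special (hX : IsSubshift X) {n : ℕ} (hn : 1 ≤ n) {y : ℤ → A} (hy : y ∈ X)
    (h : ∀ s : ℤ, ¬ RSp X n (winw n y s) ∧ ¬ LSp X n (winw n y s)) :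
    IsIsolatedPoint X y := by
  refine ⟨{z | ∀ t : Fin n, z ((t : ℕ) : ℤ) = y ((t : ℕ) : ℤ)}, ?_, ?_⟩
  · have he : {z : ℤ → A | ∀ t : Fin n, z ((t:ℕ):ℤ) = y ((t:ℕ):ℤ)} =
        ⋂ t : Fin n, (fun z : ℤ → A => z ((t:ℕ):ℤ)) ⁻¹' {y ((t:ℕ):ℤ)} := by
      ext z; simp
    rw [he]
    exact isOpen_iInter_of_finite fun t =>
      (continuous_apply ((t:ℕ):ℤ)).isOpen_preimage _ (isOpen_discrete _)
  · ext z
    simp only [Set.mem_inter_iff, Set.mem_setOf_eq, Set.mem_singleton_iff]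
    constructor
    · rintro ⟨hzU, hzX⟩
      have base : ∀ s : ℕ, s < n → y ((0:ℤ) + s) = z ((0:ℤ) + s) := by
        intro s hs
        have := hzU ⟨s, hs⟩
        simpa using this.symm
      funext m
      rcases le_or_gt 0 m with hm | hm
      · have := force_right_agree hy hzX (m.toNat + 1) base
          (fun t _ => (h ((0:ℤ) + t)).1) m.toNat (by omega)
        rw [show (0:ℤ) + (m.toNat : ℤ) = m by omega] at this
        exact this.symm
      · have := force_left_agree hy hzX ((-m).toNat) base
          (fun t _ => (h ((0:ℤ) - t)).2) ((-m).toNat) le_rfl 0 (by omega)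
        rw [show (0:ℤ) - ((-m).toNat : ℤ) + ((0:ℕ):ℤ) = m by omega] at this
        exact this.symm
    · rintro rfl
      exact ⟨fun t => rfl, hy⟩

/-! ### Core rigidity lemma -/

theorem core_eq {X : Set (ℤ → A)} (hX : IsSubshift X) {n N : ℕ} (hn : 1 ≤ n)
    (hN : 2*N + 1 ≤ n)
    (φ ψ : Equiv.Perm ↥X) (Φ Ψ : (Fin (2*N+1) → A) → A)
    (hφ : InducedBy φ N Φ) (hψ : InducedBy ψ N Ψ)
    (hFIPφ : ∀ x : ↥X, IsIsolatedPeriodicPt X ↑x → φ x = x)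
    (hFIPψ : ∀ x : ↥X, IsIsolatedPeriodicPt X ↑x → ψ x = x)
    (HR : ∀ (w : Fin n → A) (a : A) (h : ExtW X (n+1) (Fin.snoc w a)), RSp X n w →
      ∀ t : ℕ, t ≤ complexity X n →
        (φ ⟨h.choose.1, h.choose_spec.1⟩ : ℤ → A) (h.choose.2 + N + t) =
        (ψ ⟨h.choose.1, h.choose_spec.1⟩ : ℤ → A) (h.choose.2 + N + t))
    (HL : ∀ (w : Fin n → A) (a : A) (h : ExtW X (n+1) (Fin.cons a w)), LSp X n w →
      ∀ t : ℕ, t ≤ complexity X n →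
        (φ ⟨h.choose.1, h.choose_spec.1⟩ : ℤ → A) (h.choose.2 + 1 + N - t) =
        (ψ ⟨h.choose.1, h.choose_spec.1⟩ : ℤ → A) (h.choose.2 + 1 + N - t)) :
    φ = ψ := by
  set c := complexity X n with hc
  refine Equiv.ext fun xp => ?_
  obtain ⟨x, hx⟩ := xp
  refine Subtype.ext (funext fun m => ?_)
  set i := m - (N:ℤ) with hi
  -- transfer along equal Φ-windows
  have TR : ∀ (ρ : Equiv.Perm ↥X) (P : (Fin (2*N+1) → A) → A), InducedBy ρ N P →
      ∀ (x' : ℤ → A) (hx' : x' ∈ X) (i' : ℤ),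
      (∀ u : ℕ, u < 2*N+1 → x (i + u) = x' (i' + u)) →
      (ρ ⟨x, hx⟩ : ℤ → A) m = (ρ ⟨x', hx'⟩ : ℤ → A) (i' + N) := by
    intro ρ P hρ x' hx' i' hagr
    rw [hρ ⟨x, hx⟩ m, hρ ⟨x', hx'⟩ (i' + N)]
    congr 1
    funext j
    have h1 := hagr j j.isLt
    rw [show i' + (N:ℤ) - N = i' by ring]
    exact h1
  by_cases hA : ∃ j : ℤ, j ≤ i ∧ RSp X n (winw n x j)
  · -- CASE A: there is a right-special window at or before i
    obtain ⟨js, ⟨hjsi, hjsRS⟩, hmax⟩ :=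
      Int.exists_greatest_of_bdd (P := fun j => j ≤ i ∧ RSp X n (winw n x j))
        ⟨i, fun z hz => hz.1⟩ hA
    have hocc : ExtW X (n+1) (Fin.snoc (winw n x js) (x (js + n))) := by
      rw [← winw_snoc]; exact ext_winw hx _ _
    have hx₀ : hocc.choose.1 ∈ X := hocc.choose_spec.1
    have hbase : ∀ s : ℕ, s < n + 1 → x (js + s) = hocc.choose.1 (hocc.choose.2 + s) := by
      intro s hs
      have hw2 : winw (n+1) hocc.choose.1 hocc.choose.2 = winw (n+1) x js := by
        rw [hocc.choose_spec.2, winw_snoc]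
      exact (congrFun hw2 ⟨s, hs⟩).symm
    -- unified continuation
    have contA : ∀ d' : ℕ, (d' : ℕ) ≤ c → js + (d' : ℤ) ≤ i →
        (∀ u : ℕ, u < 2*N+1 → x (i + u) = x (js + d' + u)) →
        (φ ⟨x, hx⟩ : ℤ → A) m = (ψ ⟨x, hx⟩ : ℤ → A) m := by
      intro d' hd'c hd'i htrans
      have hagr2 : ∀ T : ℕ, (∀ t : ℕ, t < T → ¬ RSp X n (winw n x (js + 1 + t))) →
          ∀ s : ℕ, s < n + 1 + T → x (js + s) = hocc.choose.1 (hocc.choose.2 + s) := by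
        intro T
        induction T with
        | zero => intro _ s hs; exact hbase s (by omega)
        | succ T ih =>
          intro hT s hs
          have prev := ih (fun t ht => hT t (by omega))
          rcases lt_or_ge s (n + 1 + T) with h1 | h1
          · exact prev s h1
          · have hs' : s = n + 1 + T := by omega
            subst hs'
            have base' : ∀ s' : ℕ, s' < n →
                x ((js + 1 + T) + s') = hocc.choose.1 ((hocc.choose.2 + 1 + T) + s') := by
              intro s' hs'
              have := prev (1 + T + s') (by omega)
              convert this using 2 <;> omega
            have hlet := forced_right hx hx₀ base' (hT T (by omega))
            convert hlet using 2 <;> omega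
      have hagr3 := hagr2 d' (by
        intro t ht
        intro hRS
        have := hmax (js + 1 + t) ⟨by omega, hRS⟩
        omega)
      have htrans2 : ∀ u : ℕ, u < 2*N+1 →
          x (i + u) = hocc.choose.1 ((hocc.choose.2 + d') + u) := by
        intro u hu
        have h1 := htrans u hu
        have h2 := hagr3 (d' + u) (by omega)
        rw [h1]
        convert h2 using 2 <;> omega
      have e1 := TR φ Φ hφ hocc.choose.1 hocc.choose_spec.1 (hocc.choose.2 + d') htrans2
      have e2 := TR ψ Ψ hψ hocc.choose.1 hocc.choose_spec.1 (hocc.choose.2 + d') htrans2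
      rw [e1, e2]
      have hrec := HR (winw n x js) (x (js + n)) hocc hjsRS d' hd'c
      rw [show hocc.choose.2 + (d':ℤ) + N = hocc.choose.2 + N + d' by ring]
      exact hrec
    rcases le_or_gt (i - js) (c : ℤ) with hd | hd
    · -- near case
      refine contA (i - js).toNat (by omega) (by omega) ?_
      intro u hu
      congr 2
      omega
    · -- far case: reduce modulo a period
      obtain ⟨t₁, t₂, ht12, ht₂c, hrep⟩ := exists_rep hx n (js + 1)
      set p := t₂ - t₁ with hpdef
      have hp : 1 ≤ p := by omega
      have hw : ∀ s : ℕ, s < n → x ((js + 1 + t₁) + s) = x ((js + 1 + t₁) + p + s) := by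
        intro s hs
        have := hrep s hs
        convert this using 2 <;> omega
      have H : ∀ s : ℤ, js + 1 + t₁ ≤ s → s ≤ i → ¬ RSp X n (winw n x s) := by
        intro s hs1 hs2 hRS
        have := hmax s ⟨hs2, hRS⟩
        omega
      have hper := per_right hx hp (by omega) hw H
      have hxper : ∀ s : ℤ, js + 1 + t₁ ≤ s → x (s + p) = x s := by
        intro s hs
        have := (hper ((s - (js + 1 + t₁)).toNat)).1 0 (by omega)
        rw [show js + 1 + (t₁:ℤ) + ((s - (js + 1 + t₁)).toNat : ℤ) + ((0:ℕ):ℤ) = s by omega,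
          show js + 1 + (t₁:ℤ) + p + ((s - (js + 1 + t₁)).toNat : ℤ) + ((0:ℕ):ℤ) = s + p by omega]
          at this
        exact this.symm
      have hxadd : ∀ k : ℕ, ∀ s : ℤ, js + 1 + t₁ ≤ s → x (s + (k * p : ℕ)) = x s := by
        intro k
        induction k with
        | zero => intro s _; simp
        | succ k ih =>
          intro s hs
          have e : s + (((k+1) * p : ℕ) : ℤ) = (s + (k * p : ℕ)) + p := by push_cast; ring
          rw [e, hxper _ (by omega), ih s hs]
      obtain ⟨e, k, hek, hep⟩ : ∃ e k : ℕ, i - (js + 1 + t₁) = ((e:ℤ) + ((k * p : ℕ) : ℤ)) ∧ e < p := by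
        refine ⟨(i - (js + 1 + t₁)).toNat % p, (i - (js + 1 + t₁)).toNat / p,
          ?_, Nat.mod_lt _ (by omega)⟩
        have h0 := Nat.mod_add_div' ((i - (js + 1 + t₁)).toNat) p
        omega
      refine contA (1 + t₁ + e) (by omega) (by omega) ?_
      intro u hu
      have h2 := hxadd k (js + (1 + t₁ + e : ℕ) + u) (by omega)
      rw [← h2]
      exact congrArg x (by omega)
  · by_cases hB : ∃ j : ℤ, i ≤ j ∧ LSp X n (winw n x j)
    · -- CASE B: no RS before i, but an LS window at or after i
      obtain ⟨js, ⟨hjsi, hjsLS⟩, hmin⟩ :=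
        Int.exists_least_of_bdd (P := fun j => i ≤ j ∧ LSp X n (winw n x j))
          ⟨i, fun z hz => hz.1⟩ hB
      have hocc : ExtW X (n+1) (Fin.cons (x (js - 1)) (winw n x js)) := by
        have hcw : (Fin.cons (x (js-1)) (winw n x js) : Fin (n+1) → A) = winw (n+1) x (js-1) := by
          rw [winw_cons]
          congr 2
          ring
        rw [hcw]
        exact ext_winw hx _ _
      have hx₁ : hocc.choose.1 ∈ X := hocc.choose_spec.1
      have hbase : ∀ s : ℕ, s < n + 1 → x (js - 1 + s) = hocc.choose.1 (hocc.choose.2 + s) := by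
        intro s hs
        have hw2 : winw (n+1) hocc.choose.1 hocc.choose.2 = winw (n+1) x (js - 1) := by
          rw [hocc.choose_spec.2, winw_cons]
          congr 2
          ring
        exact (congrFun hw2 ⟨s, hs⟩).symm
      have contB : ∀ i' : ℤ, i ≤ i' → i' ≤ js → js - i' ≤ (c:ℤ) →
          (∀ u : ℕ, u < 2*N+1 → x (i + u) = x (i' + u)) →
          (φ ⟨x, hx⟩ : ℤ → A) m = (ψ ⟨x, hx⟩ : ℤ → A) m := by
        intro i' hii' hi'js hd'c htrans
        have hagr2 : ∀ T : ℕ, (∀ t : ℕ, t < T → ¬ LSp X n (winw n x (js - 1 - t))) →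
            ∀ t : ℕ, t ≤ T → ∀ s : ℕ, s < n + 1 →
              x (js - 1 - t + s) = hocc.choose.1 (hocc.choose.2 - t + s) := by
          intro T hT t
          induction t with
          | zero =>
            intro _ s hs
            have := hbase s hs
            convert this using 2 <;> omega
          | succ t ih =>
            intro ht s hs
            have win_t := ih (by omega)
            have base' : ∀ s' : ℕ, s' < n →
                x ((js - 1 - t) + s') = hocc.choose.1 ((hocc.choose.2 - t) + s') := by
              intro s' hs'
              exact win_t s' (by omega)
            have hns : ¬ LSp X n (winw n x (js - 1 - t)) := hT t (by omega)
            have hlet := forced_left hx hx₁ base' hns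
            rcases Nat.eq_zero_or_pos s with rfl | hspos
            · convert hlet using 2 <;> omega
            · have := win_t (s - 1) (by omega)
              convert this using 2 <;> omega
        set dz := (js - i').toNat with hdz
        have hdzv : (dz:ℤ) = js - i' := by omega
        have htrans2 : ∀ u : ℕ, u < 2*N+1 →
            x (i + u) = hocc.choose.1 ((hocc.choose.2 + 1 - dz) + u) := by
          intro u hu
          have h1 := htrans u hu
          rcases eq_or_lt_of_le hi'js with heq | hlt
          · have h2 := hbase (u + 1) (by omega)
            rw [h1]
            rw [show i' + (u:ℤ) = js - 1 + ((u+1 : ℕ):ℤ) by push_cast; omega]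
            rw [h2]
            exact congrArg _ (by omega)
          · set ts := (js - i' - 1).toNat with hts
            have htsv : (ts:ℤ) = js - i' - 1 := by omega
            have hagr3 := hagr2 ts (by
              intro t ht hLS
              have := hmin (js - 1 - t) ⟨by omega, hLS⟩
              omega) ts le_rfl
            have h2 := hagr3 u (by omega)
            rw [h1]
            rw [show i' + (u:ℤ) = js - 1 - ts + (u:ℤ) by omega]
            rw [h2]
            exact congrArg _ (by omega)
        have e1 := TR φ Φ hφ hocc.choose.1 hocc.choose_spec.1 (hocc.choose.2 + 1 - dz) htrans2
        have e2 := TR ψ Ψ hψ hocc.choose.1 hocc.choose_spec.1 (hocc.choose.2 + 1 - dz) htrans2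
        rw [e1, e2]
        have hrec := HL (winw n x js) (x (js - 1)) hocc hjsLS dz (by omega)
        rw [show hocc.choose.2 + 1 - (dz:ℤ) + N = hocc.choose.2 + 1 + N - dz by ring]
        exact hrec
      rcases le_or_gt (js - i) (c : ℤ) with hd | hd
      · exact contB i le_rfl hjsi (by omega) (fun u _ => rfl)
      · -- far case: reduce modulo a period (leftwards)
        obtain ⟨t₁, t₂, ht12, ht₂c, hrep⟩ := exists_rep hx n (js - 1 - c)
        set p := t₂ - t₁ with hpdef
        have hp : 1 ≤ p := by omega
        set k2 := js - 1 - (c:ℤ) + t₂ with hk2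
        have hk2le : k2 ≤ js - 1 := by omega
        have hik2 : i ≤ k2 - p := by omega
        have hw : ∀ s : ℕ, s < n → x (k2 + s) = x (k2 - p + s) := by
          intro s hs
          have := (hrep s hs).symm
          convert this using 2 <;> omega
        have H : ∀ s : ℤ, i ≤ s → s ≤ k2 → ¬ LSp X n (winw n x s) := by
          intro s hs1 hs2 hLS
          have := hmin s ⟨hs1, hLS⟩
          omega
        have hper := per_left hx hp hik2 hw H
        have hxper : ∀ s : ℤ, s ≤ k2 + n - 1 → x (s - p) = x s := by
          intro s hs
          rcases le_or_gt s k2 with hsk | hsk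
          · have := (hper ((k2 - s).toNat)).1 0 (by omega)
            rw [show k2 - ((k2 - s).toNat : ℤ) + ((0:ℕ):ℤ) = s by omega,
              show k2 - p - ((k2 - s).toNat : ℤ) + ((0:ℕ):ℤ) = s - p by omega] at this
            exact this.symm
          · have := (hper 0).1 ((s - k2).toNat) (by omega)
            rw [show k2 - ((0:ℕ):ℤ) + ((s - k2).toNat : ℤ) = s by omega,
              show k2 - p - ((0:ℕ):ℤ) + ((s - k2).toNat : ℤ) = s - p by omega] at this
            exact this.symm
        have hxsub : ∀ kk : ℕ, ∀ s : ℤ, s ≤ k2 + n - 1 → x (s - (kk * p : ℕ)) = x s := by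
          intro kk
          induction kk with
          | zero => intro s _; simp
          | succ kk ih =>
            intro s hs
            have e : s - (((kk+1) * p : ℕ) : ℤ) = (s - (kk * p : ℕ)) - p := by push_cast; ring
            have h9 : (0:ℤ) ≤ ((kk * p : ℕ) : ℤ) := by omega
            rw [e, hxper _ (by omega), ih s hs]
        obtain ⟨e, k, hek, hep⟩ : ∃ e k : ℕ, k2 - i = ((e:ℤ) + ((k * p : ℕ) : ℤ)) ∧ e < p := by
          refine ⟨(k2 - i).toNat % p, (k2 - i).toNat / p, ?_, Nat.mod_lt _ (by omega)⟩
          have h0 := Nat.mod_add_div' ((k2 - i).toNat) p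
          omega
        refine contB (k2 - e) (by omega) (by omega) (by omega) ?_
        intro u hu
        have h2 := hxsub k (k2 - e + u) (by omega)
        rw [show i + (u:ℤ) = k2 - (e:ℤ) + u - ((k * p : ℕ) : ℤ) by linarith [hek]]
        exact h2
    · -- CASE C: no RS at ≤ i and no LS at ≥ i: locally an isolated periodic point
      push_neg at hA hB
      have hnRS : ∀ s : ℤ, s ≤ i → ¬ RSp X n (winw n x s) := fun s hs => hA s hs
      have hnLS : ∀ s : ℤ, i ≤ s → ¬ LSp X n (winw n x s) := fun s hs => hB s hs
      obtain ⟨t₁, t₂, ht12, ht₂c, hrep⟩ := exists_rep hx n (i - c)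
      set p := t₂ - t₁ with hpdef
      have hp : 1 ≤ p := by omega
      set j₁ := i - (c:ℤ) + t₁ with hj₁
      have hj₁i : j₁ + p ≤ i := by omega
      have hw : ∀ s : ℕ, s < n → x (j₁ + s) = x (j₁ + p + s) := by
        intro s hs
        have := hrep s hs
        convert this using 2 <;> omega
      have hper := per_right hx hp hj₁i hw (fun s hs1 hs2 => hnRS s hs2)
      have hxper : ∀ s : ℤ, j₁ ≤ s → x (s + p) = x s := by
        intro s hs
        have := (hper ((s - j₁).toNat)).1 0 (by omega)
        rw [show j₁ + ((s - j₁).toNat : ℤ) + ((0:ℕ):ℤ) = s by omega,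
          show j₁ + (p:ℤ) + ((s - j₁).toNat : ℤ) + ((0:ℕ):ℤ) = s + p by omega] at this
        exact this.symm
      obtain ⟨y, hyX, hyag, hyper⟩ := periodic_completion hX hx hp hxper
      have hyadd : ∀ kk : ℕ, ∀ s : ℤ, y (s + (kk * p : ℕ)) = y s := by
        intro kk
        induction kk with
        | zero => intro s; simp
        | succ kk ih =>
          intro s
          have e : s + (((kk+1) * p : ℕ) : ℤ) = (s + (kk * p : ℕ)) + p := by push_cast; ring
          rw [e, hyper, ih]
      have hxadd : ∀ kk : ℕ, ∀ s : ℤ, j₁ ≤ s → x (s + (kk * p : ℕ)) = x s := by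
        intro kk
        induction kk with
        | zero => intro s _; simp
        | succ kk ih =>
          intro s hs
          have e : s + (((kk+1) * p : ℕ) : ℤ) = (s + (kk * p : ℕ)) + p := by push_cast; ring
          have hs2 : j₁ ≤ s + ((kk * p : ℕ) : ℤ) := by omega
          rw [e, hxper _ hs2, ih s hs]
      -- windows of y coincide with windows of x at suitable positions
      have hwy : ∀ s : ℤ, ∀ M : ℤ, ∃ s' : ℤ, M ≤ s' ∧ winw n y s = winw n x s' := by
        intro s M
        set kk := (max (j₁ - s) (M - s)).toNat + p with hkk
        refine ⟨s + (kk * p : ℕ), by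
          have h1 : max (j₁ - s) (M - s) ≤ ((max (j₁ - s) (M - s)).toNat : ℤ) := Int.self_le_toNat _
          have h2 : kk ≤ kk * p := Nat.le_mul_of_pos_right kk (by omega)
          have h3 : (kk:ℤ) ≤ (kk * p : ℕ) := by exact_mod_cast h2
          have h4 : M - s ≤ (kk:ℤ) := by
            have := le_max_right (j₁ - s) (M - s)
            omega
          omega, ?_⟩
        refine winw_eq_of fun u hu => ?_
        have h5 : j₁ ≤ s + (kk * p : ℕ) + u := by
          have h1 : max (j₁ - s) (M - s) ≤ ((max (j₁ - s) (M - s)).toNat : ℤ) := Int.self_le_toNat _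
          have h2 : kk ≤ kk * p := Nat.le_mul_of_pos_right kk (by omega)
          have h3 : (kk:ℤ) ≤ (kk * p : ℕ) := by exact_mod_cast h2
          have h4 : j₁ - s ≤ (kk:ℤ) := by
            have := le_max_left (j₁ - s) (M - s)
            omega
          omega
        calc y (s + u) = y (s + u + (kk * p : ℕ)) := (hyadd kk (s + u)).symm
          _ = x (s + u + (kk * p : ℕ)) := hyag _ (by omega)
          _ = x (s + (kk * p : ℕ) + u) := by rw [show s + (u:ℤ) + ((kk * p : ℕ):ℤ) = s + ((kk * p : ℕ):ℤ) + u by ring]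
      have hyRS : ∀ s : ℤ, ¬ RSp X n (winw n y s) := by
        intro s hRS
        obtain ⟨s', hs'M, hs'w⟩ := hwy s j₁
        obtain ⟨e2, kk, hmod, he2p⟩ : ∃ e2 kk : ℕ, (s' - j₁).toNat = e2 + kk * p ∧ e2 < p :=
          ⟨_, _, (Nat.mod_add_div' _ p).symm, Nat.mod_lt _ (by omega)⟩
        have hw2 : winw n x s' = winw n x (j₁ + (e2:ℤ)) := by
          refine winw_eq_of fun u hu => ?_
          have h6 := hxadd kk (j₁ + (e2:ℤ) + u) (by omega)
          rw [show s' + (u:ℤ) = j₁ + (e2:ℤ) + u + (kk * p : ℕ) by omega]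
          exact h6
        rw [hs'w, hw2] at hRS
        exact hnRS (j₁ + (e2:ℤ)) (by omega) hRS
      have hyLS : ∀ s : ℤ, ¬ LSp X n (winw n y s) := by
        intro s hLS
        obtain ⟨s', hs'M, hs'w⟩ := hwy s (max i j₁)
        rw [hs'w] at hLS
        exact hnLS s' (le_trans (le_max_left i j₁) hs'M) hLS
      have hiso := isolated_of_no_special hX hn hyX (fun s => ⟨hyRS s, hyLS s⟩)
      have hipp : IsIsolatedPeriodicPt X y := ⟨hyX, hiso, p, hp, fun mm => hyper mm⟩
      have htrans : ∀ u : ℕ, u < 2*N+1 → x (i + u) = y (i + u) := by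
        intro u hu
        exact (hyag (i + u) (by omega)).symm
      have e1 := TR φ Φ hφ y hyX i htrans
      have e2 := TR ψ Ψ hψ y hyX i htrans
      rw [e1, e2]
      have hfy1 : φ ⟨y, hyX⟩ = ⟨y, hyX⟩ := hFIPφ ⟨y, hyX⟩ hipp
      have hfy2 : ψ ⟨y, hyX⟩ = ⟨y, hyX⟩ := hFIPψ ⟨y, hyX⟩ hipp
      rw [hfy1, hfy2]

/-! ### Records and final counting -/

lemma ext_fst_of_snoc {X : Set (ℤ → A)} {n : ℕ} {w : Fin n → A} {a : A}
    (h : ExtW X (n+1) (Fin.snoc w a)) : ExtW X n w := by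
  obtain ⟨⟨x, i⟩, hx, hwin⟩ := h
  refine ⟨(x, i), hx, funext fun j => ?_⟩
  have := congrFun hwin j.castSucc
  simpa [winw] using this

lemma ext_fst_of_cons {X : Set (ℤ → A)} {n : ℕ} {w : Fin n → A} {a : A}
    (h : ExtW X (n+1) (Fin.cons a w)) : ExtW X n w := by
  obtain ⟨⟨x, i⟩, hx, hwin⟩ := h
  refine ⟨(x, i + 1), hx, funext fun j => ?_⟩
  have h2 := congrFun hwin j.succ
  simp only [winw, Fin.cons_succ, Fin.val_succ] at h2
  show x (i + 1 + ((j:ℕ):ℤ)) = w j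
  rw [← h2]
  congr 1
  push_cast
  ring

open Classical in
noncomputable def recR {X : Set (ℤ → A)} (n N L : ℕ) (ρ : Equiv.Perm ↥X)
    (wdef : {v : Fin L → A // ExtW X L v})
    (q : {w : Fin n → A // ExtW X n w ∧ RSp X n w} × A) : {v : Fin L → A // ExtW X L v} :=
  if h : ExtW X (n+1) (Fin.snoc q.1.1 q.2) then
    ⟨winw L ((ρ ⟨h.choose.1, h.choose_spec.1⟩ : ↥X) : ℤ → A) (h.choose.2 + N),
      ext_winw (ρ ⟨h.choose.1, h.choose_spec.1⟩).2 _ _⟩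
  else wdef

open Classical in
noncomputable def recL {X : Set (ℤ → A)} (n N c : ℕ) (ρ : Equiv.Perm ↥X)
    (wdef : {v : Fin (1+c) → A // ExtW X (1+c) v})
    (q : {w : Fin n → A // ExtW X n w ∧ LSp X n w} × A) : {v : Fin (1+c) → A // ExtW X (1+c) v} :=
  if h : ExtW X (n+1) (Fin.cons q.2 q.1.1) then
    ⟨winw (1+c) ((ρ ⟨h.choose.1, h.choose_spec.1⟩ : ↥X) : ℤ → A) (h.choose.2 + 1 + N - c),
      ext_winw (ρ ⟨h.choose.1, h.choose_spec.1⟩).2 _ _⟩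
  else wdef

end Aux

set_option maxHeartbeats 1000000 in
/-- For any subshift, the number of automorphisms of range
`⌊(n-1)/2⌋` fixing all isolated periodic points is at most
`c_{1+c_n(X)}(X) ^ (2|A|(c_{n+1}(X) - c_n(X)))`. -/
theorem card_autFIP_range_le
    {A : Type} [Fintype A] [TopologicalSpace A] [DiscreteTopology A]
    (X : Set (ℤ → A)) (hX : IsSubshift X) (n : ℕ) (hn : 1 ≤ n) :
    Nat.card {φ : ↥(Aut hX) //
        (∀ x : ↥X, IsIsolatedPeriodicPt X ↑x → (φ : Equiv.Perm ↥X) x = x) ∧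
        HasRange (φ : Equiv.Perm ↥X) ((n - 1) / 2)} ≤
      complexity X (1 + complexity X n) ^
        (2 * Fintype.card A * (complexity X (n + 1) - complexity X n)) := by
  classical
  rcases X.eq_empty_or_nonempty with hXe | hne
  · -- empty subshift: at most one element
    have hsub : Subsingleton {φ : ↥(Aut hX) //
        (∀ x : ↥X, IsIsolatedPeriodicPt X ↑x → (φ : Equiv.Perm ↥X) x = x) ∧
        HasRange (φ : Equiv.Perm ↥X) ((n - 1) / 2)} := by
      constructor
      intro a b
      apply Subtype.ext
      apply Subtype.ext
      apply Equiv.ext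
      intro z
      exact absurd z.2 (by simp [hXe])
    have h1 : Nat.card {φ : ↥(Aut hX) //
        (∀ x : ↥X, IsIsolatedPeriodicPt X ↑x → (φ : Equiv.Perm ↥X) x = x) ∧
        HasRange (φ : Equiv.Perm ↥X) ((n - 1) / 2)} ≤ 1 := by
      rcases isEmpty_or_nonempty {φ : ↥(Aut hX) //
          (∀ x : ↥X, IsIsolatedPeriodicPt X ↑x → (φ : Equiv.Perm ↥X) x = x) ∧
          HasRange (φ : Equiv.Perm ↥X) ((n - 1) / 2)} with hT | hT
      · rw [Nat.card_of_isEmpty]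
        omega
      · haveI : Inhabited {φ : ↥(Aut hX) //
          (∀ x : ↥X, IsIsolatedPeriodicPt X ↑x → (φ : Equiv.Perm ↥X) x = x) ∧
          HasRange (φ : Equiv.Perm ↥X) ((n - 1) / 2)} := ⟨hT.some⟩
        exact le_of_eq Nat.card_unique
    have h2 : complexity X (n+1) = 0 := by
      rw [← card_ext_eq (X := X) (n+1)]
      have : IsEmpty {w : Fin (n+1) → A // ExtW X (n+1) w} := by
        constructor
        rintro ⟨w, ⟨⟨x, i⟩, hx, -⟩⟩
        rw [hXe] at hx
        exact hx
      exact Nat.card_of_isEmpty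
    have h3 : complexity X n = 0 := by
      rw [← card_ext_eq (X := X) n]
      have : IsEmpty {w : Fin n → A // ExtW X n w} := by
        constructor
        rintro ⟨w, ⟨⟨x, i⟩, hx, -⟩⟩
        rw [hXe] at hx
        exact hx
      exact Nat.card_of_isEmpty
    rw [h2, h3]
    have he : 2 * Fintype.card A * (0 - 0) = 0 := by simp
    rw [he, pow_zero]
    exact h1
  · set N := (n - 1) / 2 with hNdef
    have hN : 2 * N + 1 ≤ n := by omega
    set c := complexity X n with hc
    set L := 1 + c with hL
    set W := {v : Fin L → A // ExtW X L v} with hW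
    obtain ⟨x₀, hx₀⟩ := id hne
    have wdef : W := ⟨winw L x₀ 0, ext_winw hx₀ L 0⟩
    set D := {φ : ↥(Aut hX) //
        (∀ x : ↥X, IsIsolatedPeriodicPt X ↑x → (φ : Equiv.Perm ↥X) x = x) ∧
        HasRange (φ : Equiv.Perm ↥X) ((n - 1) / 2)} with hD
    set SR := {w : Fin n → A // ExtW X n w ∧ RSp X n w} with hSR
    set SL := {w : Fin n → A // ExtW X n w ∧ LSp X n w} with hSL
    set F : D → ((SR × A) → W) × ((SL × A) → W) :=
      fun φ => (recR n N L ((φ : ↥(Aut hX)) : Equiv.Perm ↥X) wdef,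
                recL n N c ((φ : ↥(Aut hX)) : Equiv.Perm ↥X) wdef) with hF
    have hinj : Function.Injective F := by
      intro φ ψ hFeq
      have hR := congrArg Prod.fst hFeq
      have hLft := congrArg Prod.snd hFeq
      simp only [hF] at hR hLft
      set ρφ : Equiv.Perm ↥X := ((φ : ↥(Aut hX)) : Equiv.Perm ↥X) with hρφ
      set ρψ : Equiv.Perm ↥X := ((ψ : ↥(Aut hX)) : Equiv.Perm ↥X) with hρψ
      obtain ⟨Φ, hΦ⟩ := φ.2.2
      obtain ⟨Ψ, hΨ⟩ := ψ.2.2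
      have hcore : ρφ = ρψ := by
        refine core_eq hX hn hN ρφ ρψ Φ Ψ hΦ hΨ φ.2.1 ψ.2.1 ?_ ?_
        · -- right records agree
          intro w a h hRS t ht
          have hq := congrFun hR (⟨w, ⟨ext_fst_of_snoc h, hRS⟩⟩, a)
          simp only [recR, dif_pos h] at hq
          have := congrFun (congrArg Subtype.val hq) ⟨t, by omega⟩
          exact this
        · -- left records agree
          intro w a h hLS t ht
          have hq := congrFun hLft (⟨w, ⟨ext_fst_of_cons h, hLS⟩⟩, a)
          simp only [recL, dif_pos h] at hq
          have h2 := congrFun (congrArg Subtype.val hq) ⟨c - t, by omega⟩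
          simp only [winw] at h2
          rw [show h.choose.2 + 1 + (N:ℤ) - c + ((c - t : ℕ) : ℤ) =
            h.choose.2 + 1 + N - t by omega] at h2
          exact h2
      exact Subtype.ext (Subtype.ext hcore)
    have hcard1 : Nat.card D ≤ Nat.card (((SR × A) → W) × ((SL × A) → W)) :=
      Nat.card_le_card_of_injective F hinj
    have hcard2 : Nat.card (((SR × A) → W) × ((SL × A) → W)) =
        (Nat.card W) ^ (Nat.card SR * Fintype.card A) *
        (Nat.card W) ^ (Nat.card SL * Fintype.card A) := by
      rw [Nat.card_prod, Nat.card_fun, Nat.card_fun, Nat.card_prod, Nat.card_prod,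
        Nat.card_eq_fintype_card (α := A)]
    have hWc : Nat.card W = complexity X L := card_ext_eq (X := X) L
    have hB1 : 1 ≤ complexity X L := complexity_pos hne L
    have hSRle : Nat.card SR ≤ complexity X (n+1) - complexity X n := card_RS_le (X := X) n
    have hSLle : Nat.card SL ≤ complexity X (n+1) - complexity X n := card_LS_le (X := X) n
    calc Nat.card D ≤ (Nat.card W) ^ (Nat.card SR * Fintype.card A) *
        (Nat.card W) ^ (Nat.card SL * Fintype.card A) := by rw [← hcard2]; exact hcard1
      _ = (complexity X L) ^ (Nat.card SR * Fintype.card A + Nat.card SL * Fintype.card A) := by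
          rw [hWc, pow_add]
      _ ≤ (complexity X L) ^ (2 * Fintype.card A * (complexity X (n+1) - complexity X n)) := by
          apply Nat.pow_le_pow_right hB1
          have h1 := Nat.mul_le_mul_right (Fintype.card A) hSRle
          have h2 := Nat.mul_le_mul_right (Fintype.card A) hSLle
          nlinarith [h1, h2]
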